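/- Let p > 3 be a prime and λ ∈ F_p with λ ∉ {0, 1, −1}. Then the map (u, v) ↦ (2(v+1)/u², 4(1 + v + λu²)/u³) is a bijection from the set {(u, v) ∈ F_p × F_p : v² = u⁴ + 2λu² + 1 and u ≠ 0} onto the set {(x, y) ∈ F_p × F_p : y² = x³ + 2λx² − 4x − 8λ and y ≠ 0}. -/

import Mathlib

theorem jacobi_to_weierstrass_bijection (p : ℕ) [Fact p.Prime] (hp : 3 < p)
    (l : ZMod p) (hl0 : l ≠ 0) (hl1 : l ≠ 1) (hlm1 : l ≠ -1) :
    Set.BijOn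
      (fun uv : ZMod p × ZMod p =>
        (2 * (uv.2 + 1) / uv.1 ^ 2, 4 * (1 + uv.2 + l * uv.1 ^ 2) / uv.1 ^ 3))
      {uv : ZMod p × ZMod p | uv.2 ^ 2 = uv.1 ^ 4 + 2 * l * uv.1 ^ 2 + 1 ∧ uv.1 ≠ 0}
      {xy : ZMod p × ZMod p |
        xy.2 ^ 2 = xy.1 ^ 3 + 2 * l * xy.1 ^ 2 - 4 * xy.1 - 8 * l ∧ xy.2 ≠ 0} := by
  have h2 : (2 : ZMod p) ≠ 0 := by
    have : ((2 : ℕ) : ZMod p) ≠ 0 := by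
      rw [Ne, ZMod.natCast_eq_zero_iff]
      intro h
      have := Nat.le_of_dvd (by norm_num) h
      omega
    simpa using this
  have h4 : (4 : ZMod p) ≠ 0 := by
    have : (4 : ZMod p) = 2 * 2 := by norm_num
    rw [this]; exact mul_ne_zero h2 h2
  -- inverse map
  set g : ZMod p × ZMod p → ZMod p × ZMod p :=
    fun xy => (2 * (xy.1 + 2 * l) / xy.2, xy.1 * (2 * (xy.1 + 2 * l) / xy.2) ^ 2 / 2 - 1)
    with hg
  -- key nonvanishing on Jacobi side
  have key1 : ∀ u v : ZMod p, u ≠ 0 → v ^ 2 = u ^ 4 + 2 * l * u ^ 2 + 1 →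
      1 + v + l * u ^ 2 ≠ 0 := by
    intro u v hu hc h
    have hv : v = -(1 + l * u ^ 2) := by linear_combination h
    have : (l - 1) * (l + 1) * u ^ 4 = 0 := by
      rw [hv] at hc; linear_combination hc
    rcases mul_eq_zero.mp this with h' | h'
    · rcases mul_eq_zero.mp h' with h'' | h''
      · exact hl1 (by linear_combination h'')
      · exact hlm1 (by linear_combination h'')
    · exact hu (pow_eq_zero_iff (by norm_num) |>.mp h')
  -- key nonvanishing on Weierstrass side
  have key2 : ∀ x y : ZMod p, y ≠ 0 →
      y ^ 2 = x ^ 3 + 2 * l * x ^ 2 - 4 * x - 8 * l → x + 2 * l ≠ 0 := by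
    intro x y hy hc h
    have hx : x = -(2 * l) := by linear_combination h
    apply hy
    have : y ^ 2 = 0 := by rw [hx] at hc; linear_combination hc
    exact pow_eq_zero_iff (by norm_num) |>.mp this
  have hmf : Set.MapsTo
      (fun uv : ZMod p × ZMod p =>
        (2 * (uv.2 + 1) / uv.1 ^ 2, 4 * (1 + uv.2 + l * uv.1 ^ 2) / uv.1 ^ 3))
      {uv : ZMod p × ZMod p | uv.2 ^ 2 = uv.1 ^ 4 + 2 * l * uv.1 ^ 2 + 1 ∧ uv.1 ≠ 0}
      {xy : ZMod p × ZMod p |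
        xy.2 ^ 2 = xy.1 ^ 3 + 2 * l * xy.1 ^ 2 - 4 * xy.1 - 8 * l ∧ xy.2 ≠ 0} := by
    rintro ⟨u, v⟩ ⟨hc, hu⟩
    refine ⟨?_, ?_⟩
    · show (4 * (1 + v + l * u ^ 2) / u ^ 3) ^ 2 = _
      field_simp
      linear_combination (-8 * (v + 1 + l * u ^ 2)) * hc
    · show 4 * (1 + v + l * u ^ 2) / u ^ 3 ≠ 0
      exact div_ne_zero (mul_ne_zero h4 (key1 u v hu hc)) (pow_ne_zero _ hu)
  have hmg : Set.MapsTo g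
      {xy : ZMod p × ZMod p |
        xy.2 ^ 2 = xy.1 ^ 3 + 2 * l * xy.1 ^ 2 - 4 * xy.1 - 8 * l ∧ xy.2 ≠ 0}
      {uv : ZMod p × ZMod p | uv.2 ^ 2 = uv.1 ^ 4 + 2 * l * uv.1 ^ 2 + 1 ∧ uv.1 ≠ 0} := by
    rintro ⟨x, y⟩ ⟨hc, hy⟩
    refine ⟨?_, ?_⟩
    · show (x * (2 * (x + 2 * l) / y) ^ 2 / 2 - 1) ^ 2 =
        (2 * (x + 2 * l) / y) ^ 4 + 2 * l * (2 * (x + 2 * l) / y) ^ 2 + 1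
      field_simp
      linear_combination (-4 * (x + 2 * l) ^ 3) * hc
    · show 2 * (x + 2 * l) / y ≠ 0
      exact div_ne_zero (mul_ne_zero h2 (key2 x y hy hc)) hy
  refine Set.InvOn.bijOn ⟨?_, ?_⟩ hmf hmg
  · rintro ⟨u, v⟩ ⟨hc, hu⟩
    have hynz : 4 * (1 + v + l * u ^ 2) / u ^ 3 ≠ 0 :=
      div_ne_zero (mul_ne_zero h4 (key1 u v hu hc)) (pow_ne_zero _ hu)
    have hnum : (1 + v + l * u ^ 2) ≠ 0 := key1 u v hu hc
    simp only [hg, Prod.mk.injEq]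
    have hD : u ^ 2 * (u ^ 2 * (4 * (1 + v + l * u ^ 2))) ^ 2 * 2 ≠ 0 :=
      mul_ne_zero (mul_ne_zero (pow_ne_zero _ hu)
        (pow_ne_zero _ (mul_ne_zero (pow_ne_zero _ hu) (mul_ne_zero h4 hnum)))) h2
    constructor
    · field_simp
      have h' : 1 + v + u ^ 2 * l ≠ 0 := fun h => hnum (by linear_combination h)
      rw [show v + 1 + u ^ 2 * l = 1 + v + u ^ 2 * l by ring, div_eq_iff h']
      ring
    · field_simp
      have h' : 1 + v + u ^ 2 * l ≠ 0 := fun h => hnum (by linear_combination h)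
      rw [show v + 1 + u ^ 2 * l = 1 + v + u ^ 2 * l by ring, sub_eq_iff_eq_add,
        div_eq_iff (pow_ne_zero 2 h')]
      ring
  · rintro ⟨x, y⟩ ⟨hc, hy⟩
    have hx2l : x + 2 * l ≠ 0 := key2 x y hy hc
    have hunz : 2 * (x + 2 * l) / y ≠ 0 := div_ne_zero (mul_ne_zero h2 hx2l) hy
    simp only [hg, Prod.mk.injEq]
    have hE : y ^ 2 * 2 * y ^ 2 * (2 * (x + 2 * l)) ^ 3 ≠ 0 :=
      mul_ne_zero (mul_ne_zero (mul_ne_zero (pow_ne_zero _ hy) h2) (pow_ne_zero _ hy))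
        (pow_ne_zero _ (mul_ne_zero h2 hx2l))
    constructor
    · field_simp
      ring
    · field_simp
      ring
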